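/- Let T be a thick tree with loops with sink s. A configuration u ∈ ℕ^{V₀} is recurrent if and only if for every j ∈ V₀ one has deg(j) > u_j ≥ deg(j) − e_{j,p(j)}; that is, the sandpile group G equals {u ∈ ℕ^{V₀} : ∀ j ∈ V₀, deg(j) > u_j ≥ deg(j) − e_{j,p(j)}}. -/

import Mathlib

namespace SandpilePaper

variable {V : Type*} [Fintype V] [DecidableEq V]

/-- Configurations: assignments of numbers of grains to ordinary (non-sink) vertices. -/
abbrev Conf (s : V) : Type _ := {i : V // i ≠ s} → ℕ

/-- The degree of a vertex: `deg i = ∑ j, e i j`. -/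
def deg (e : V → V → ℕ) (i : V) : ℕ := ∑ j, e i j

/-- Toppling the (unstable) vertex `i`. -/
def toppleAt (e : V → V → ℕ) (s : V) (i : {i : V // i ≠ s}) (u : Conf s) : Conf s :=
  fun j => if j = i then u i - deg e i.1 + e i.1 i.1 else u j + e i.1 j.1

/-- One toppling step: some unstable vertex topples. -/
def Topple (e : V → V → ℕ) (s : V) (u v : Conf s) : Prop :=
  ∃ i : {i : V // i ≠ s}, deg e i.1 ≤ u i ∧ v = toppleAt e s i u

/-- A configuration is stable if every ordinary vertex has fewer grains than its degree. -/
def Stable (e : V → V → ℕ) (s : V) (u : Conf s) : Prop :=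
  ∀ j : {i : V // i ≠ s}, u j < deg e j.1

/-- The underlying simple graph: edges between distinct vertices with positive multiplicity. -/
def graph (e : V → V → ℕ) : SimpleGraph V := SimpleGraph.fromRel fun i j => 0 < e i j

/-- `σ` is a stabilization map: `σ u` is stable and reached from `u` by finitely many topplings. -/
def IsStabilization (e : V → V → ℕ) (s : V) (σ : Conf s → Conf s) : Prop :=
  ∀ u, Stable e s (σ u) ∧ Relation.ReflTransGen (Topple e s) u (σ u)

/-- A stable configuration `u` is recurrent if every configuration can reach it. -/
def Recurrent (e : V → V → ℕ) (s : V) (σ : Conf s → Conf s) (u : Conf s) : Prop :=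
  Stable e s u ∧ ∀ v : Conf s, ∃ w : Conf s, σ (v + w) = u

/-- Apply a sequence of topplings. -/
def applySeq (e : V → V → ℕ) (s : V) (u : Conf s) : List {i : V // i ≠ s} → Conf s
  | [] => u
  | i :: L => applySeq e s (toppleAt e s i u) L

/-- A toppling sequence is valid if each toppled vertex is unstable when toppled. -/
def ValidSeq (e : V → V → ℕ) (s : V) (u : Conf s) : List {i : V // i ≠ s} → Prop
  | [] => True
  | i :: L => deg e i.1 ≤ u i ∧ ValidSeq e s (toppleAt e s i u) L

/-- `succeq e s i j` means `i ⪰ j`: `j` lies on the unique path from `i` to the sink `s`. -/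
def succeq (e : V → V → ℕ) (s i j : V) : Prop :=
  (graph e).dist i s = (graph e).dist i j + (graph e).dist j s

noncomputable instance (e : V → V → ℕ) (s i j : V) : Decidable (succeq e s i j) := Nat.decEq _ _

/-- `p` assigns to each ordinary vertex its parent: its neighbor on the path to the sink. -/
def IsParent (e : V → V → ℕ) (s : V) (p : {i : V // i ≠ s} → V) : Prop :=
  ∀ j : {i : V // i ≠ s}, (graph e).Adj j.1 (p j) ∧
    (graph e).dist (p j) s + 1 = (graph e).dist j.1 s

/-- The set `{i : i ⪰ j}`. -/
noncomputable def descendants (e : V → V → ℕ) (s : V) (j : {i : V // i ≠ s}) :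
    Finset {i : V // i ≠ s} :=
  Finset.univ.filter fun i => succeq e s i.1 j.1

/-- The set `{i : i ≻ j}`. -/
noncomputable def strictDescendants (e : V → V → ℕ) (s : V) (j : {i : V // i ≠ s}) :
    Finset {i : V // i ≠ s} :=
  Finset.univ.filter fun i => i ≠ j ∧ succeq e s i.1 j.1

/-- `j` is a leaf: its parent is its only neighbor in the underlying tree. -/
def IsLeaf (e : V → V → ℕ) (s : V) (p : {i : V // i ≠ s} → V) (j : {i : V // i ≠ s}) : Prop :=
  ∀ k : V, (graph e).Adj j.1 k → k = p j

/-- Rows of the toppling matrix `Δ`. -/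
def deltaRow (e : V → V → ℕ) (s : V) (i j : {i : V // i ≠ s}) : ℤ :=
  if i = j then (deg e i.1 : ℤ) - (e i.1 i.1 : ℤ) else -(e i.1 j.1 : ℤ)

/-- The lattice `Λ` spanned by the rows of the toppling matrix. -/
def lattice (e : V → V → ℕ) (s : V) : AddSubgroup ({i : V // i ≠ s} → ℤ) :=
  AddSubgroup.closure (Set.range (deltaRow e s))

/-- The map `φ(u)_j = ∑_{i ⪰ j} u_i (mod e_{j,p(j)})`. -/
noncomputable def phi (e : V → V → ℕ) (s : V) (p : {i : V // i ≠ s} → V) (u : Conf s)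
    (j : {i : V // i ≠ s}) : ZMod (e j.1 (p j)) :=
  ∑ i ∈ descendants e s j, (u i : ZMod (e j.1 (p j)))

/-- The map `φ` on integer vectors. -/
noncomputable def phiZ (e : V → V → ℕ) (s : V) (p : {i : V // i ≠ s} → V) (u : {i : V // i ≠ s} → ℤ)
    (j : {i : V // i ≠ s}) : ZMod (e j.1 (p j)) :=
  ∑ i ∈ descendants e s j, (u i : ZMod (e j.1 (p j)))



/-! ### Auxiliary machinery -/

section Aux

variable {e : V → V → ℕ} {s : V}

lemma toppleAt_self' {i : {i : V // i ≠ s}} {u : Conf s} :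
    (toppleAt e s i u) i = u i - deg e i.1 + e i.1 i.1 := by
  simp [toppleAt]

lemma toppleAt_other' {i m : {i : V // i ≠ s}} {u : Conf s} (h : m ≠ i) :
    (toppleAt e s i u) m = u m + e i.1 m.1 := by
  simp [toppleAt, h]

lemma toppleAt_comm' {i j : {i : V // i ≠ s}} {u : Conf s} (hij : i ≠ j)
    (hi : deg e i.1 ≤ u i) (hj : deg e j.1 ≤ u j) :
    toppleAt e s j (toppleAt e s i u) = toppleAt e s i (toppleAt e s j u) := by
  funext m
  by_cases hmi : m = i
  · subst hmi
    have h1 : toppleAt e s j (toppleAt e s m u) m = (toppleAt e s m u) m + e j.1 m.1 :=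
      toppleAt_other' hij
    have h2 := toppleAt_self' (i := m) (u := u) (e := e) (s := s)
    have h3 : toppleAt e s m (toppleAt e s j u) m
        = (toppleAt e s j u) m - deg e m.1 + e m.1 m.1 := toppleAt_self'
    have h4 : (toppleAt e s j u) m = u m + e j.1 m.1 := toppleAt_other' hij
    omega
  · by_cases hmj : m = j
    · subst hmj
      have h1 : toppleAt e s m (toppleAt e s i u) m
          = (toppleAt e s i u) m - deg e m.1 + e m.1 m.1 := toppleAt_self'
      have h2 : (toppleAt e s i u) m = u m + e i.1 m.1 := toppleAt_other' (Ne.symm hij)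
      have h3 : toppleAt e s i (toppleAt e s m u) m = (toppleAt e s m u) m + e i.1 m.1 :=
        toppleAt_other' (Ne.symm hij)
      have h4 := toppleAt_self' (i := m) (u := u) (e := e) (s := s)
      omega
    · have h1 : toppleAt e s j (toppleAt e s i u) m = (toppleAt e s i u) m + e j.1 m.1 :=
        toppleAt_other' hmj
      have h2 : (toppleAt e s i u) m = u m + e i.1 m.1 := toppleAt_other' hmi
      have h3 : toppleAt e s i (toppleAt e s j u) m = (toppleAt e s j u) m + e i.1 m.1 :=
        toppleAt_other' hmi
      have h4 : (toppleAt e s j u) m = u m + e j.1 m.1 := toppleAt_other' hmj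
      omega

lemma topple_diamond' {u v₁ v₂ : Conf s} (h1 : Topple e s u v₁) (h2 : Topple e s u v₂) :
    ∃ d, Relation.ReflGen (Topple e s) v₁ d ∧ Relation.ReflTransGen (Topple e s) v₂ d := by
  obtain ⟨i, hi, rfl⟩ := h1
  obtain ⟨j, hj, rfl⟩ := h2
  by_cases hij : i = j
  · subst hij; exact ⟨_, Relation.ReflGen.refl, Relation.ReflTransGen.refl⟩
  · refine ⟨toppleAt e s j (toppleAt e s i u), ?_, ?_⟩
    · apply Relation.ReflGen.single
      refine ⟨j, ?_, rfl⟩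
      have h1 : (toppleAt e s i u) j = u j + e i.1 j.1 :=
        toppleAt_other' (fun h => hij h.symm)
      omega
    · apply Relation.ReflTransGen.single
      refine ⟨i, ?_, toppleAt_comm' hij hi hj⟩
      have h1 : (toppleAt e s j u) i = u i + e j.1 i.1 := toppleAt_other' hij
      omega

lemma eq_of_rtg_stable' {u z : Conf s} (hu : Stable e s u)
    (h : Relation.ReflTransGen (Topple e s) u z) : z = u := by
  rcases (Relation.ReflTransGen.cases_head h) with rfl | ⟨c, ⟨i, hi, -⟩, -⟩
  · rfl
  · exact absurd hi (not_le.mpr (hu i))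

lemma unique_nf' {x u u' : Conf s} (h1 : Relation.ReflTransGen (Topple e s) x u)
    (h2 : Relation.ReflTransGen (Topple e s) x u')
    (hu : Stable e s u) (hu' : Stable e s u') : u = u' := by
  obtain ⟨c, hc, hc'⟩ := Relation.church_rosser
    (fun a b c hab hac => topple_diamond' hab hac) h1 h2
  rw [← eq_of_rtg_stable' hu hc, ← eq_of_rtg_stable' hu' hc']

/-- `(Δᵀ k)_j`. -/
def rowSum (e : V → V → ℕ) (s : V) (k : {i : V // i ≠ s} → ℕ) (j : {i : V // i ≠ s}) : ℤ :=
  ∑ i, (k i : ℤ) * deltaRow e s i j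

lemma sum_V_split {M : Type*} [AddCommMonoid M] (s : V) (f : V → M) :
    ∑ v, f v = f s + ∑ i : {i : V // i ≠ s}, f i.1 := by
  rw [← Finset.add_sum_erase Finset.univ f (Finset.mem_univ s)]
  congr 1
  exact Finset.sum_subtype (p := fun x => x ≠ s) (Finset.univ.erase s)
    (fun x => by simp [Finset.mem_erase]) f

lemma deg_split (j : {i : V // i ≠ s}) :
    (deg e j.1 : ℤ) = (e j.1 s : ℤ) + (e j.1 j.1 : ℤ)
      + ∑ i ∈ Finset.univ.erase j, (e j.1 i.1 : ℤ) := by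
  have h1 : (deg e j.1 : ℤ) = ∑ v, (e j.1 v : ℤ) := by
    unfold deg; push_cast; ring
  rw [h1, sum_V_split s (fun v => (e j.1 v : ℤ)),
    ← Finset.add_sum_erase Finset.univ (fun i : {i : V // i ≠ s} => (e j.1 i.1 : ℤ))
      (Finset.mem_univ j)]
  ring

lemma rowSum_formula (hsym : ∀ i j : V, e i j = e j i) (k : {i : V // i ≠ s} → ℕ)
    (j : {i : V // i ≠ s}) :
    rowSum e s k j = (k j : ℤ) * (e j.1 s : ℤ)
      + ∑ i ∈ Finset.univ.erase j, ((k j : ℤ) - (k i : ℤ)) * (e j.1 i.1 : ℤ) := by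
  unfold rowSum
  rw [← Finset.add_sum_erase Finset.univ _ (Finset.mem_univ j)]
  have h1 : deltaRow e s j j = (deg e j.1 : ℤ) - (e j.1 j.1 : ℤ) := by simp [deltaRow]
  have h2 : ∀ i ∈ Finset.univ.erase j, (k i : ℤ) * deltaRow e s i j
      = -((k i : ℤ) * (e j.1 i.1 : ℤ)) := by
    intro i hi
    have hij : i ≠ j := (Finset.mem_erase.mp hi).1
    simp [deltaRow, hij, hsym i.1 j.1]
    try ring
  rw [Finset.sum_congr rfl h2, h1, deg_split j]
  have h3 : ∑ i ∈ Finset.univ.erase j, ((k j : ℤ) - (k i : ℤ)) * (e j.1 i.1 : ℤ)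
      = (k j : ℤ) * (∑ i ∈ Finset.univ.erase j, (e j.1 i.1 : ℤ))
        - ∑ i ∈ Finset.univ.erase j, (k i : ℤ) * (e j.1 i.1 : ℤ) := by
    simp only [sub_mul]
    rw [Finset.sum_sub_distrib, Finset.mul_sum]
  rw [h3, Finset.sum_neg_distrib]
  ring

lemma toppleAt_int {i : {i : V // i ≠ s}} {u : Conf s} (hi : deg e i.1 ≤ u i)
    (m : {i : V // i ≠ s}) :
    ((toppleAt e s i u) m : ℤ) = (u m : ℤ) - deltaRow e s i m := by
  by_cases hmi : m = i
  · subst hmi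
    have h1 := toppleAt_self' (i := m) (u := u) (e := e) (s := s)
    have h2 : deltaRow e s m m = (deg e m.1 : ℤ) - (e m.1 m.1 : ℤ) := by simp [deltaRow]
    omega
  · have h1 : (toppleAt e s i u) m = u m + e i.1 m.1 := toppleAt_other' hmi
    have h2 : deltaRow e s i m = -(e i.1 m.1 : ℤ) := by
      have hne : i ≠ m := fun h => hmi h.symm
      simp [deltaRow, hne]
    omega

lemma rowSum_peel (k : {i : V // i ≠ s} → ℕ) (j : {i : V // i ≠ s}) (hj : 1 ≤ k j)
    (m : {i : V // i ≠ s}) :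
    rowSum e s k m = rowSum e s (fun i => if i = j then k i - 1 else k i) m
      + deltaRow e s j m := by
  unfold rowSum
  have h : ∀ i ∈ Finset.univ, ((k i : ℤ)) * deltaRow e s i m
      = ((if i = j then (k i : ℕ) - 1 else k i : ℕ) : ℤ) * deltaRow e s i m
        + (if i = j then deltaRow e s j m else 0) := by
    intro i _
    by_cases hij : i = j
    · subst hij
      have hc : ((k i - 1 : ℕ) : ℤ) = (k i : ℤ) - 1 := by omega
      simp [hc]
      try ring
    · simp [hij]
  rw [Finset.sum_congr rfl h, Finset.sum_add_distrib, Finset.sum_ite_eq' Finset.univ j]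
  simp

lemma reach_down (hsym : ∀ i j : V, e i j = e j i)
    {p : {i : V // i ≠ s} → V} (hp : IsParent e s p) {u : Conf s}
    (hu : ∀ j : {i : V // i ≠ s}, deg e j.1 ≤ u j + e j.1 (p j)) :
    ∀ (N : ℕ) (k : {i : V // i ≠ s} → ℕ) (x : Conf s), (∑ i, k i = N) →
      (∀ j, (x j : ℤ) = (u j : ℤ) + rowSum e s k j) →
      Relation.ReflTransGen (Topple e s) x u := by
  intro N
  induction N using Nat.strong_induction_on with
  | _ N IH =>
    intro k x hN hx
    by_cases h0 : ∀ i, k i = 0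
    · have : x = u := by
        funext j
        have := hx j
        have hz : rowSum e s k j = 0 := by
          unfold rowSum
          apply Finset.sum_eq_zero
          intro i _
          rw [h0 i]; simp
        omega
      rw [this]
    · push_neg at h0
      obtain ⟨i0, hi0⟩ := h0
      have hne : (Finset.univ : Finset {i : V // i ≠ s}).Nonempty := ⟨i0, Finset.mem_univ i0⟩
      obtain ⟨jm, -, hjm⟩ := Finset.exists_max_image Finset.univ k hne
      set S : Finset {i : V // i ≠ s} := Finset.univ.filter (fun i => k i = k jm) with hS
      have hSne : S.Nonempty := ⟨jm, by simp [hS]⟩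
      obtain ⟨j, hjS, hjmin⟩ := Finset.exists_min_image S (fun i => (graph e).dist i.1 s) hSne
      have hkj : k j = k jm := (Finset.mem_filter.mp hjS).2
      have hmax : ∀ i, k i ≤ k j := fun i => hkj ▸ hjm i (Finset.mem_univ i)
      have hkj1 : 1 ≤ k j := le_trans (by omega) (hmax i0)
      have hadj := (hp j).1
      have hepos : 0 < e j.1 (p j) := by
        have := ((SimpleGraph.fromRel_adj _ j.1 (p j)).mp hadj).2
        rcases this with h | h
        · exact h
        · rw [hsym]; exact h
      have hform := rowSum_formula hsym k j
      have hterms : ∀ i ∈ Finset.univ.erase j,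
          (0 : ℤ) ≤ ((k j : ℤ) - (k i : ℤ)) * (e j.1 i.1 : ℤ) := by
        intro i _
        have := hmax i
        have h1 : (0:ℤ) ≤ (k j : ℤ) - (k i : ℤ) := by omega
        positivity
      have hsumnn : (0:ℤ) ≤ ∑ i ∈ Finset.univ.erase j,
          ((k j : ℤ) - (k i : ℤ)) * (e j.1 i.1 : ℤ) := Finset.sum_nonneg hterms
      have hge : (u j : ℤ) + (e j.1 (p j) : ℤ) ≤ (x j : ℤ) := by
        by_cases hps : p j = s
        · have h5 : (e j.1 (p j) : ℤ) ≤ (k j : ℤ) * (e j.1 s : ℤ) := by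
            rw [hps]
            have h6 : (1:ℤ) ≤ (k j : ℤ) := by exact_mod_cast hkj1
            nlinarith [Int.natCast_nonneg (e j.1 s)]
          rw [hx j, hform]
          linarith
        · set q : {i : V // i ≠ s} := ⟨p j, hps⟩ with hq
          have hqj : q ≠ j := by
            intro h
            have hval : p j = j.1 := congrArg Subtype.val h
            have h2 := (hp j).2
            rw [hval] at h2
            omega
          have hqmem : q ∈ Finset.univ.erase j := Finset.mem_erase.mpr ⟨hqj, Finset.mem_univ q⟩
          have hkq : k q < k j := by
            by_contra hcon
            have hkqe : k q = k j := le_antisymm (hmax q) (by omega)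
            have hqS : q ∈ S := by simp [hS, hkqe, hkj]
            have hd := hjmin q hqS
            have h2 := (hp j).2
            have hq1 : q.1 = p j := rfl
            rw [hq1] at hd
            omega
          have h5 : (e j.1 (p j) : ℤ) ≤ ((k j : ℤ) - (k q : ℤ)) * (e j.1 q.1 : ℤ) := by
            have h6 : (1:ℤ) ≤ (k j : ℤ) - (k q : ℤ) := by omega
            nlinarith [Int.natCast_nonneg (e j.1 q.1)]
          have h7 := Finset.single_le_sum hterms hqmem
          have h8 : (0:ℤ) ≤ (k j : ℤ) * (e j.1 s : ℤ) := by positivity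
          rw [hx j, hform]
          linarith
      have hxj : deg e j.1 ≤ x j := by
        have h9 := hu j
        omega
      have hstep : Topple e s x (toppleAt e s j x) := ⟨j, hxj, rfl⟩
      set k' : {i : V // i ≠ s} → ℕ := fun i => if i = j then k i - 1 else k i with hk'
      have hx' : ∀ m, ((toppleAt e s j x) m : ℤ) = (u m : ℤ) + rowSum e s k' m := by
        intro m
        rw [toppleAt_int hxj m, hx m, rowSum_peel k j hkj1 m]
        ring
      have hsum : ∑ i, k' i + 1 = N := by
        have hterm : ∀ i ∈ Finset.univ, k i = k' i + (if i = j then 1 else 0) := by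
          intro i _
          by_cases hij : i = j
          · subst hij; simp [hk']; omega
          · simp [hk', hij]
        rw [← hN, Finset.sum_congr rfl hterm, Finset.sum_add_distrib,
          Finset.sum_ite_eq' Finset.univ j]
        simp
      have hNpos : 1 ≤ N := by omega
      exact Relation.ReflTransGen.head hstep
        (IH (N - 1) (by omega) k' (toppleAt e s j x) (by omega) hx')

end Aux


section TreeAux

variable {G : SimpleGraph V}

lemma dist_split (hG : G.Connected) {x y v : V} (w : G.Walk x y) (hw : w.length = G.dist x y)
    (hv : v ∈ w.support) : G.dist x y = G.dist x v + G.dist v y := by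
  have h1 : G.dist x v ≤ (w.takeUntil v hv).length := SimpleGraph.dist_le _
  have h2 : G.dist v y ≤ (w.dropUntil v hv).length := SimpleGraph.dist_le _
  have h3 : (w.takeUntil v hv).length + (w.dropUntil v hv).length = w.length := by
    rw [← SimpleGraph.Walk.length_append, w.take_spec hv]
  have htri : G.dist x y ≤ G.dist x v + G.dist v y := hG.dist_triangle
  omega

lemma tree_chain (hG : G.IsTree) {s n a b : V}
    (ha : G.dist n s = G.dist n a + G.dist a s)
    (hb : G.dist n s = G.dist n b + G.dist b s)
    (hle : G.dist b s ≤ G.dist a s) :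
    G.dist a s = G.dist a b + G.dist b s := by
  have hconn := hG.isConnected
  obtain ⟨p1, hp1⟩ := hconn.exists_walk_length_eq_dist n a
  obtain ⟨p2, hp2⟩ := hconn.exists_walk_length_eq_dist a s
  obtain ⟨q1, hq1⟩ := hconn.exists_walk_length_eq_dist n b
  obtain ⟨q2, hq2⟩ := hconn.exists_walk_length_eq_dist b s
  set W : G.Walk n s := p1.append p2 with hW
  set W' : G.Walk n s := q1.append q2 with hW'
  have hWlen : W.length = G.dist n s := by
    rw [hW, SimpleGraph.Walk.length_append, hp1, hp2, ha]
  have hW'len : W'.length = G.dist n s := by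
    rw [hW', SimpleGraph.Walk.length_append, hq1, hq2, hb]
  have hWp : W.IsPath := W.isPath_of_length_eq_dist hWlen
  have hW'p : W'.IsPath := W'.isPath_of_length_eq_dist hW'len
  have hWW' : W = W' := by
    obtain ⟨P, -, hu⟩ := hG.existsUnique_path n s
    rw [hu W hWp, hu W' hW'p]
  have hbW : b ∈ W.support := by
    rw [hWW', hW', SimpleGraph.Walk.mem_support_append_iff]
    exact Or.inl q1.end_mem_support
  rw [hW, SimpleGraph.Walk.mem_support_append_iff] at hbW
  rcases hbW with hb1 | hb2
  · have := dist_split hconn p1 hp1 hb1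
    have hba : G.dist b s = G.dist b a + G.dist a s := by omega
    have h0 : G.dist b a = 0 := by omega
    have : b = a := (hconn.dist_eq_zero_iff (u := b) (v := a)).mp h0
    subst this
    simp [SimpleGraph.dist_self]
  · exact dist_split hconn p2 hp2 hb2

lemma tree_adj_dist_ne (hG : G.IsTree) {s x y : V} (hxy : G.Adj x y) :
    G.dist x s ≠ G.dist y s := by
  intro h
  have hconn := hG.isConnected
  obtain ⟨P, hPp, hPl⟩ := hconn.exists_path_of_dist y s
  have hxP : x ∉ P.support := by
    intro hx
    have := dist_split hconn P hPl hx
    have h0 : G.dist y x = 0 := by omega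
    exact hxy.ne ((hconn.dist_eq_zero_iff.mp h0).symm)
  have hWp : (P.cons hxy).IsPath := hPp.cons hxP
  obtain ⟨Q, hQp, hQl⟩ := hconn.exists_path_of_dist x s
  obtain ⟨R, -, hu⟩ := hG.existsUnique_path x s
  have heq : P.cons hxy = Q := by rw [hu _ hWp, hu _ hQp]
  have : (P.cons hxy).length = Q.length := by rw [heq]
  rw [SimpleGraph.Walk.length_cons, hPl, hQl] at this
  omega

end TreeAux

section SucceqAux

variable {e : V → V → ℕ} {s : V}

lemma adj_iff' (hsym : ∀ i j : V, e i j = e j i) {a b : V} :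
    (graph e).Adj a b ↔ a ≠ b ∧ 0 < e a b := by
  rw [graph, SimpleGraph.fromRel_adj]
  constructor
  · rintro ⟨h1, h2 | h2⟩
    · exact ⟨h1, h2⟩
    · exact ⟨h1, by rw [hsym]; exact h2⟩
  · rintro ⟨h1, h2⟩
    exact ⟨h1, Or.inl h2⟩

lemma succ_refl' (i : V) : succeq e s i i := by
  simp [succeq, SimpleGraph.dist_self]

lemma succ_dist' {i j : V} (h : succeq e s i j) :
    (graph e).dist j s ≤ (graph e).dist i s := by
  unfold succeq at h; omega

lemma succ_trans' (htree : (graph e).IsTree) {i c j : V}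
    (h1 : succeq e s i c) (h2 : succeq e s c j) : succeq e s i j := by
  unfold succeq at *
  have t1 : (graph e).dist i j ≤ (graph e).dist i c + (graph e).dist c j :=
    htree.isConnected.dist_triangle
  have t2 : (graph e).dist i s ≤ (graph e).dist i j + (graph e).dist j s :=
    htree.isConnected.dist_triangle
  omega

lemma succ_antisym' (htree : (graph e).IsTree) {i j : V}
    (h1 : succeq e s i j) (h2 : succeq e s j i) : i = j := by
  unfold succeq at *
  have hc : (graph e).dist i j = (graph e).dist j i := SimpleGraph.dist_comm
  have h0 : (graph e).dist i j = 0 := by omega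
  exact (htree.isConnected.dist_eq_zero_iff).mp h0

lemma succ_of_child' (htree : (graph e).IsTree) {c j : V} (hadj : (graph e).Adj c j)
    (hd : (graph e).dist j s + 1 = (graph e).dist c s) : succeq e s c j := by
  have h1 : (graph e).dist c j = 1 := SimpleGraph.dist_eq_one_iff_adj.mpr hadj
  unfold succeq
  omega

lemma succ_parent' (htree : (graph e).IsTree) {p : {i : V // i ≠ s} → V}
    (hp : IsParent e s p) (j : {i : V // i ≠ s}) : succeq e s j.1 (p j) :=
  succ_of_child' htree (hp j).1 (hp j).2

lemma succ_chain' (htree : (graph e).IsTree) {n a b : V}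
    (ha : succeq e s n a) (hb : succeq e s n b)
    (hle : (graph e).dist b s ≤ (graph e).dist a s) : succeq e s a b :=
  tree_chain htree ha hb hle

lemma parent_eq' (htree : (graph e).IsTree) {p : {i : V // i ≠ s} → V}
    (hp : IsParent e s p) {j : {i : V // i ≠ s}} {m : V}
    (hadj : (graph e).Adj j.1 m)
    (hd : (graph e).dist m s + 1 = (graph e).dist j.1 s) : m = p j := by
  have h1 : succeq e s j.1 m := succ_of_child' htree hadj hd
  have h2 : succeq e s j.1 (p j) := succ_parent' htree hp j
  have hdp := (hp j).2
  have h3 : succeq e s m (p j) := succ_chain' htree h1 h2 (by omega)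
  have h4 : succeq e s (p j) m := succ_chain' htree h2 h1 (by omega)
  exact succ_antisym' htree h3 h4

lemma neighbor_class (htree : (graph e).IsTree) {p : {i : V // i ≠ s} → V}
    (hp : IsParent e s p) {n m : {i : V // i ≠ s}}
    (hadj : (graph e).Adj n.1 m.1) : m.1 = p n ∨ p m = n.1 := by
  have hne := tree_adj_dist_ne htree (s := s) hadj
  have hd1 : (graph e).dist m.1 s ≤ 1 + (graph e).dist n.1 s := by
    have t : (graph e).dist m.1 s ≤ (graph e).dist m.1 n.1 + (graph e).dist n.1 s :=
      htree.isConnected.dist_triangle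
    have : (graph e).dist m.1 n.1 = 1 := SimpleGraph.dist_eq_one_iff_adj.mpr hadj.symm
    omega
  have hd2 : (graph e).dist n.1 s ≤ 1 + (graph e).dist m.1 s := by
    have t : (graph e).dist n.1 s ≤ (graph e).dist n.1 m.1 + (graph e).dist m.1 s :=
      htree.isConnected.dist_triangle
    have : (graph e).dist n.1 m.1 = 1 := SimpleGraph.dist_eq_one_iff_adj.mpr hadj
    omega
  by_cases hc : (graph e).dist m.1 s < (graph e).dist n.1 s
  · left
    exact parent_eq' htree hp hadj (by omega)
  · right
    exact (parent_eq' htree hp (j := m) hadj.symm (by omega)).symm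

lemma lemK (htree : (graph e).IsTree) {p : {i : V // i ≠ s} → V}
    (hp : IsParent e s p) {n j₀ j : {i : V // i ≠ s}}
    (hadj : (graph e).Adj j.1 n.1) (hn : succeq e s n.1 j₀.1)
    (hj : ¬ succeq e s j.1 j₀.1) : j.1 = p j₀ := by
  rcases neighbor_class htree hp (n := j) (m := n) hadj with hcase | hcase
  ·
    exfalso
    have h1 : succeq e s j.1 n.1 := by
      have := succ_parent' htree hp j
      rwa [← hcase] at this
    exact hj (succ_trans' htree h1 hn)
  · -- p n = j.1
    have hdn : (graph e).dist (p n) s + 1 = (graph e).dist n.1 s := (hp n).2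
    rw [hcase] at hdn
    have hdj₀ : (graph e).dist j₀.1 s ≤ (graph e).dist n.1 s := succ_dist' hn
    by_cases hc : (graph e).dist j₀.1 s ≤ (graph e).dist j.1 s
    · exfalso
      have h1 : succeq e s n.1 j.1 := by
        have := succ_parent' htree hp n
        rwa [hcase] at this
      exact hj (succ_chain' htree h1 hn hc)
    · -- dist j < dist j₀ ≤ dist n = dist j + 1, so dist j₀ = dist n and n = j₀
      have hnj₀ : n.1 = j₀.1 := by
        unfold succeq at hn
        have h0 : (graph e).dist n.1 j₀.1 = 0 := by omega
        exact (htree.isConnected.dist_eq_zero_iff).mp h0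
      rw [← hcase, Subtype.ext hnj₀]

end SucceqAux


section ExistsK

variable {e : V → V → ℕ} {s : V}

lemma epos_parent (hsym : ∀ i j : V, e i j = e j i) {p : {i : V // i ≠ s} → V}
    (hp : IsParent e s p) (j : {i : V // i ≠ s}) : 0 < e j.1 (p j) := by
  have := ((SimpleGraph.fromRel_adj _ j.1 (p j)).mp (hp j).1).2
  rcases this with h | h
  · exact h
  · rw [hsym]; exact h

lemma rowSum_linear (c : ℕ) (a b : {i : V // i ≠ s} → ℕ) (m : {i : V // i ≠ s}) :
    rowSum e s (fun i => c * a i + b i) m = (c : ℤ) * rowSum e s a m + rowSum e s b m := by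
  unfold rowSum
  rw [Finset.mul_sum, ← Finset.sum_add_distrib]
  apply Finset.sum_congr rfl
  intro i _
  push_cast
  ring

lemma exists_k_single (hsym : ∀ i j : V, e i j = e j i) (htree : (graph e).IsTree)
    {p : {i : V // i ≠ s} → V} (hp : IsParent e s p) (j₀ : {i : V // i ≠ s}) :
    ∃ k : {i : V // i ≠ s} → ℕ,
      1 ≤ rowSum e s k j₀ ∧ ∀ j, 0 ≤ rowSum e s k j := by
  generalize hd : (graph e).dist j₀.1 s = d
  induction d using Nat.strong_induction_on generalizing j₀ with
  | _ d IH =>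
    have hd1 : 1 ≤ (graph e).dist j₀.1 s := htree.isConnected.pos_dist_of_ne j₀.2
    by_cases hps : p j₀ = s
    · -- base case: constant vector 1
      have hone : ∀ j : {i : V // i ≠ s}, rowSum e s (fun _ => 1) j = (e j.1 s : ℤ) := by
        intro j
        rw [rowSum_formula hsym (fun _ => 1) j]
        push_cast
        simp
      refine ⟨fun _ => 1, ?_, ?_⟩
      · rw [hone j₀]
        have := epos_parent hsym hp j₀
        rw [hps] at this
        omega
      · intro j
        rw [hone j]
        positivity
    · set q : {i : V // i ≠ s} := ⟨p j₀, hps⟩ with hqdef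
      have hdq : (graph e).dist q.1 s + 1 = (graph e).dist j₀.1 s := (hp j₀).2
      obtain ⟨k', hk'1, hk'0⟩ := IH ((graph e).dist q.1 s) (by omega) q rfl
      set χ : {i : V // i ≠ s} → ℕ := fun i => if succeq e s i.1 j₀.1 then 1 else 0 with hχdef
      have hχle : ∀ i, χ i ≤ 1 := by
        intro i
        by_cases h : succeq e s i.1 j₀.1 <;> simp [hχdef, h]
      have hχj₀ : χ j₀ = 1 := by simp [hχdef, succ_refl']
      have hχq : χ q = 0 := by
        have hns : ¬ succeq e s q.1 j₀.1 := by
          intro h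
          have := succ_dist' h
          omega
        simp [hχdef, hns]
      have hqj₀ : q ≠ j₀ := by
        intro h
        rw [h] at hdq
        omega
      -- rowSum χ at j₀ is at least 1
      have hχrow_j₀ : 1 ≤ rowSum e s χ j₀ := by
        rw [rowSum_formula hsym χ j₀]
        have hterms : ∀ i ∈ Finset.univ.erase j₀,
            (0:ℤ) ≤ ((χ j₀ : ℤ) - (χ i : ℤ)) * (e j₀.1 i.1 : ℤ) := by
          intro i _
          have h1 := hχle i
          have h2 : (0:ℤ) ≤ (χ j₀ : ℤ) - (χ i : ℤ) := by
            rw [hχj₀]; exact_mod_cast by omega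
          positivity
        have hqmem : q ∈ Finset.univ.erase j₀ := Finset.mem_erase.mpr ⟨hqj₀, Finset.mem_univ q⟩
        have h5 := Finset.single_le_sum hterms hqmem
        have h6 : ((χ j₀ : ℤ) - (χ q : ℤ)) * (e j₀.1 q.1 : ℤ) = (e j₀.1 (p j₀) : ℤ) := by
          rw [hχj₀, hχq]
          norm_num
          rfl
        have h7 := epos_parent hsym hp j₀
        have h8 : (0:ℤ) ≤ (χ j₀ : ℤ) * (e j₀.1 s : ℤ) := by positivity
        rw [h6] at h5
        have h9 : (1:ℤ) ≤ (e j₀.1 (p j₀) : ℤ) := by exact_mod_cast h7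
        linarith
      -- rowSum χ at any j ≠ q is nonneg
      have hχrow_other : ∀ j, j ≠ q → (0:ℤ) ≤ rowSum e s χ j := by
        intro j hjq
        rw [rowSum_formula hsym χ j]
        by_cases hχj : χ j = 1
        · have hterms : ∀ i ∈ Finset.univ.erase j,
              (0:ℤ) ≤ ((χ j : ℤ) - (χ i : ℤ)) * (e j.1 i.1 : ℤ) := by
            intro i _
            have h1 := hχle i
            have h2 : (0:ℤ) ≤ (χ j : ℤ) - (χ i : ℤ) := by
              rw [hχj]; exact_mod_cast by omega
            positivity
          have h8 : (0:ℤ) ≤ (χ j : ℤ) * (e j.1 s : ℤ) := by positivity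
          have := Finset.sum_nonneg hterms
          linarith
        · have hχj0 : χ j = 0 := by
            have := hχle j
            omega
          have hnsucc : ¬ succeq e s j.1 j₀.1 := by
            intro h
            rw [hχdef] at hχj0
            simp [h] at hχj0
          have hterms : ∀ i ∈ Finset.univ.erase j,
              ((χ j : ℤ) - (χ i : ℤ)) * (e j.1 i.1 : ℤ) = 0 := by
            intro i hi
            have hij : i ≠ j := (Finset.mem_erase.mp hi).1
            by_cases hei : e j.1 i.1 = 0
            · rw [hei]; simp
            · by_cases hχi : χ i = 0
              · rw [hχj0, hχi]; simp
              · have hχi1 : succeq e s i.1 j₀.1 := by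
                  by_contra hcon
                  rw [hχdef] at hχi
                  simp [hcon] at hχi
                have hadj : (graph e).Adj j.1 i.1 := by
                  rw [adj_iff' hsym]
                  refine ⟨?_, by omega⟩
                  intro hcon
                  exact hij (Subtype.ext hcon.symm)
                have := lemK htree hp (n := i) (j₀ := j₀) (j := j) hadj hχi1 hnsucc
                exact absurd (Subtype.ext this : j = q) hjq
          rw [Finset.sum_congr rfl hterms]
          rw [hχj0]
          simp
      -- rowSum χ at q is at least -(deg q)
      have hχrow_q : -(deg e q.1 : ℤ) ≤ rowSum e s χ q := by
        rw [rowSum_formula hsym χ q]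
        have hterms : ∀ i ∈ Finset.univ.erase q,
            -(e q.1 i.1 : ℤ) ≤ ((χ q : ℤ) - (χ i : ℤ)) * (e q.1 i.1 : ℤ) := by
          intro i _
          have h1 := hχle i
          have h2 : -(1:ℤ) ≤ (χ q : ℤ) - (χ i : ℤ) := by
            rw [hχq]
            have : (χ i : ℤ) ≤ 1 := by exact_mod_cast h1
            omega
          nlinarith [Int.natCast_nonneg (e q.1 i.1)]
        have h5 := Finset.sum_le_sum hterms
        have h6 : (0:ℤ) ≤ (χ q : ℤ) * (e q.1 s : ℤ) := by positivity
        have h7 := deg_split (e := e) q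
        have h8 : ∑ i ∈ Finset.univ.erase q, -(e q.1 i.1 : ℤ)
            = -∑ i ∈ Finset.univ.erase q, (e q.1 i.1 : ℤ) := by
          rw [Finset.sum_neg_distrib]
        have h9 : (0:ℤ) ≤ (e q.1 s : ℤ) := by positivity
        have h10 : (0:ℤ) ≤ (e q.1 q.1 : ℤ) := by positivity
        rw [h8] at h5
        linarith
      -- assemble
      refine ⟨fun i => deg e q.1 * k' i + χ i, ?_, ?_⟩
      · rw [rowSum_linear]
        have h1 : (0:ℤ) ≤ (deg e q.1 : ℤ) * rowSum e s k' j₀ := by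
          have := hk'0 j₀
          positivity
        linarith
      · intro j
        rw [rowSum_linear]
        by_cases hjq : j = q
        · rw [hjq]
          have h1 : (deg e q.1 : ℤ) ≤ (deg e q.1 : ℤ) * rowSum e s k' q := by
            nlinarith [Int.natCast_nonneg (deg e q.1), hk'1]
          linarith [hχrow_q]
        · have h1 : (0:ℤ) ≤ (deg e q.1 : ℤ) * rowSum e s k' j := by
            have := hk'0 j
            positivity
          have := hχrow_other j hjq
          linarith

lemma exists_k_full (hsym : ∀ i j : V, e i j = e j i) (htree : (graph e).IsTree)
    {p : {i : V // i ≠ s} → V} (hp : IsParent e s p) (t : {i : V // i ≠ s} → ℕ) :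
    ∃ k : {i : V // i ≠ s} → ℕ, ∀ j, (t j : ℤ) ≤ rowSum e s k j := by
  choose f hf1 hf0 using exists_k_single hsym htree hp (s := s)
  refine ⟨fun i => ∑ j₀, t j₀ * f j₀ i, ?_⟩
  intro j
  have hlin : rowSum e s (fun i => ∑ j₀, t j₀ * f j₀ i) j
      = ∑ j₀, (t j₀ : ℤ) * rowSum e s (f j₀) j := by
    unfold rowSum
    have h1 : ∀ i ∈ Finset.univ, ((∑ j₀, t j₀ * f j₀ i : ℕ) : ℤ) * deltaRow e s i j
        = ∑ j₀, (t j₀ : ℤ) * ((f j₀ i : ℤ) * deltaRow e s i j) := by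
      intro i _
      push_cast
      rw [Finset.sum_mul]
      apply Finset.sum_congr rfl
      intro j₀ _
      ring
    rw [Finset.sum_congr rfl h1, Finset.sum_comm]
    apply Finset.sum_congr rfl
    intro j₀ _
    rw [Finset.mul_sum]
  rw [hlin]
  have hterms : ∀ j₀ ∈ Finset.univ, (0:ℤ) ≤ (t j₀ : ℤ) * rowSum e s (f j₀) j := by
    intro j₀ _
    have := hf0 j₀ j
    positivity
  have h5 := Finset.single_le_sum hterms (Finset.mem_univ j)
  have h6 : (t j : ℤ) * 1 ≤ (t j : ℤ) * rowSum e s (f j) j := by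
    have h7 := hf1 j
    have h8 : (0:ℤ) ≤ (t j : ℤ) := by positivity
    nlinarith
  linarith

end ExistsK


section ListAux

variable {e : V → V → ℕ} {s : V}

lemma applySeq_cons (x : Conf s) (i : {i : V // i ≠ s}) (L : List {i : V // i ≠ s}) :
    applySeq e s x (i :: L) = applySeq e s (toppleAt e s i x) L := rfl

lemma validSeq_cons (x : Conf s) (i : {i : V // i ≠ s}) (L : List {i : V // i ≠ s}) :
    ValidSeq e s x (i :: L) ↔ deg e i.1 ≤ x i ∧ ValidSeq e s (toppleAt e s i x) L := Iff.rfl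

lemma applySeq_append (x : Conf s) (A B : List {i : V // i ≠ s}) :
    applySeq e s x (A ++ B) = applySeq e s (applySeq e s x A) B := by
  induction A generalizing x with
  | nil => rfl
  | cons i A IH => rw [List.cons_append, applySeq_cons, applySeq_cons, IH]

lemma validSeq_append (x : Conf s) (A B : List {i : V // i ≠ s}) :
    ValidSeq e s x (A ++ B) ↔
      ValidSeq e s x A ∧ ValidSeq e s (applySeq e s x A) B := by
  induction A generalizing x with
  | nil =>
    show ValidSeq e s x B ↔ True ∧ ValidSeq e s x B
    simp [applySeq]
  | cons i A IH =>
    rw [List.cons_append, validSeq_cons, validSeq_cons, IH, applySeq_cons, and_assoc]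

lemma applySeq_not_mem {x : Conf s} {B : List {i : V // i ≠ s}} {n : {i : V // i ≠ s}}
    (h : n ∉ B) :
    (applySeq e s x B) n = x n + (B.map (fun i => e i.1 n.1)).sum := by
  induction B generalizing x with
  | nil => simp [applySeq]
  | cons i B IH =>
    have hni : n ≠ i := fun hh => h (by rw [hh]; exact List.mem_cons_self)
    have hnB : n ∉ B := fun hh => h (List.mem_cons_of_mem i hh)
    rw [applySeq_cons, IH hnB, toppleAt_other' hni]
    simp
    omega

lemma list_sum_ge {α : Type*} [DecidableEq α] (L : List α) (T : Finset α)
    (hT : ∀ m ∈ T, m ∈ L) (f : α → ℕ) : ∑ m ∈ T, f m ≤ (L.map f).sum := by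
  have h1 : (L.map f).sum = ∑ m ∈ L.toFinset, L.count m • f m := Finset.sum_list_map_count L f
  have h2 : T ⊆ L.toFinset := fun m hm => List.mem_toFinset.mpr (hT m hm)
  calc ∑ m ∈ T, f m ≤ ∑ m ∈ T, L.count m • f m := by
        apply Finset.sum_le_sum
        intro m hm
        have := List.count_pos_iff.mpr (hT m hm)
        have hn : L.count m • f m = L.count m * f m := rfl
        rw [hn]
        nlinarith
    _ ≤ ∑ m ∈ L.toFinset, L.count m • f m := Finset.sum_le_sum_of_subset h2
    _ = (L.map f).sum := h1.symm

lemma exists_last_split {α : Type*} {L : List α} {j : α} (h : j ∈ L) :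
    ∃ A B, L = A ++ j :: B ∧ j ∉ B := by
  induction L with
  | nil => simp at h
  | cons a L IH =>
    by_cases hj : j ∈ L
    · obtain ⟨A, B, hAB, hB⟩ := IH hj
      exact ⟨a :: A, B, by rw [hAB]; rfl, hB⟩
    · have : j = a := by
        rcases List.mem_cons.mp h with h1 | h1
        · exact h1
        · exact absurd h1 hj
      exact ⟨[], L, by rw [this]; rfl, hj⟩

lemma mem_of_big {x y : Conf s} {L : List {i : V // i ≠ s}}
    (hxy : applySeq e s x L = y) (hst : Stable e s y) (j : {i : V // i ≠ s})
    (hxj : deg e j.1 ≤ x j) : j ∈ L := by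
  by_contra h0
  have := applySeq_not_mem (e := e) (x := x) h0
  rw [hxy] at this
  have := hst j
  omega

end ListAux

section DegAux

variable {e : V → V → ℕ} {s : V}

lemma deg_split_nat (j : {i : V // i ≠ s}) :
    deg e j.1 = e j.1 s + ∑ i : {i : V // i ≠ s}, e j.1 i.1 := by
  unfold deg
  exact sum_V_split s (fun v => e j.1 v)

lemma parent_dist_ne {p : {i : V // i ≠ s} → V} (hp : IsParent e s p)
    (n : {i : V // i ≠ s}) : p n ≠ n.1 := by
  intro h
  have := (hp n).2
  rw [h] at this
  omega

/-- Key degree bound: the degree of `n` is at most the loops, the parent edge and the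
edges to children. -/
lemma deg_le_children (hsym : ∀ i j : V, e i j = e j i) (htree : (graph e).IsTree)
    {p : {i : V // i ≠ s} → V} (hp : IsParent e s p) (n : {i : V // i ≠ s}) :
    deg e n.1 ≤ e n.1 (p n) + e n.1 n.1
      + ∑ m ∈ Finset.univ.filter (fun m : {i : V // i ≠ s} => p m = n.1), e n.1 m.1 := by
  set C : Finset {i : V // i ≠ s} :=
    Finset.univ.filter (fun m : {i : V // i ≠ s} => p m = n.1) with hC
  have hnC : n ∉ C := by
    intro h
    have := (Finset.mem_filter.mp h).2
    exact parent_dist_ne hp n this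
  have hsplit := deg_split_nat (e := e) n
  rw [← Finset.add_sum_erase Finset.univ (fun i : {i : V // i ≠ s} => e n.1 i.1)
    (Finset.mem_univ n)] at hsplit
  -- split the sum over `erase n` into nonzero terms
  have hfilter : ∑ i ∈ (Finset.univ.erase n).filter (fun m => e n.1 m.1 ≠ 0), e n.1 i.1
      = ∑ i ∈ Finset.univ.erase n, e n.1 i.1 := Finset.sum_filter_ne_zero _
  by_cases hps : p n = s
  · -- all nonzero neighbours distinct from n are children
    have hsub : (Finset.univ.erase n).filter (fun m => e n.1 m.1 ≠ 0) ⊆ C := by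
      intro m hm
      obtain ⟨hm1, hm2⟩ := Finset.mem_filter.mp hm
      have hmn : m ≠ n := (Finset.mem_erase.mp hm1).1
      have hadj : (graph e).Adj n.1 m.1 := by
        rw [adj_iff' hsym]
        exact ⟨fun hh => hmn (Subtype.ext hh.symm), by omega⟩
      rcases neighbor_class htree hp hadj with h | h
      · exfalso
        rw [hps] at h
        exact m.2 h
      · exact Finset.mem_filter.mpr ⟨Finset.mem_univ m, h⟩
    have h1 : ∑ i ∈ (Finset.univ.erase n).filter (fun m => e n.1 m.1 ≠ 0), e n.1 i.1
        ≤ ∑ m ∈ C, e n.1 m.1 := Finset.sum_le_sum_of_subset hsub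
    rw [hps] at *
    omega
  · set q : {i : V // i ≠ s} := ⟨p n, hps⟩ with hq
    have hqC : q ∉ C := by
      intro h
      have h1 := (Finset.mem_filter.mp h).2
      have h2 := (hp n).2
      have h3 := (hp q).2
      have hq1 : q.1 = p n := rfl
      rw [h1] at h3
      rw [← hq1] at h2
      omega
    have hsub : (Finset.univ.erase n).filter (fun m => e n.1 m.1 ≠ 0) ⊆ insert q C := by
      intro m hm
      obtain ⟨hm1, hm2⟩ := Finset.mem_filter.mp hm
      have hmn : m ≠ n := (Finset.mem_erase.mp hm1).1
      have hadj : (graph e).Adj n.1 m.1 := by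
        rw [adj_iff' hsym]
        exact ⟨fun hh => hmn (Subtype.ext hh.symm), by omega⟩
      rcases neighbor_class htree hp hadj with h | h
      · exact Finset.mem_insert.mpr (Or.inl (Subtype.ext h))
      · exact Finset.mem_insert.mpr (Or.inr (Finset.mem_filter.mpr ⟨Finset.mem_univ m, h⟩))
    have h1 : ∑ i ∈ (Finset.univ.erase n).filter (fun m => e n.1 m.1 ≠ 0), e n.1 i.1
        ≤ ∑ m ∈ insert q C, e n.1 m.1 := Finset.sum_le_sum_of_subset hsub
    rw [Finset.sum_insert hqC] at h1
    have hens : e n.1 s = 0 := by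
      by_contra hcon
      have hadj : (graph e).Adj n.1 s := by
        rw [adj_iff' hsym]
        exact ⟨n.2, by omega⟩
      have hd1 : (graph e).dist n.1 s = 1 := SimpleGraph.dist_eq_one_iff_adj.mpr hadj
      have h2 := (hp n).2
      have h3 : (graph e).dist (p n) s = 0 := by omega
      exact hps ((htree.isConnected.dist_eq_zero_iff).mp h3)
    have hq1 : e n.1 q.1 = e n.1 (p n) := rfl
    omega

end DegAux


section MainAux

variable {e : V → V → ℕ} {s : V}

lemma rtg_to_list {x y : Conf s} (h : Relation.ReflTransGen (Topple e s) x y) :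
    ∃ L, ValidSeq e s x L ∧ applySeq e s x L = y := by
  induction h using Relation.ReflTransGen.head_induction_on with
  | refl => exact ⟨[], trivial, rfl⟩
  | head hstep _ IH =>
    obtain ⟨i, hi, rfl⟩ := hstep
    obtain ⟨L, hv, hxy⟩ := IH
    exact ⟨i :: L, ⟨hi, hv⟩, hxy⟩

lemma measure_lt {p : {i : V // i ≠ s} → V} (hp : IsParent e s p)
    {m n : {i : V // i ≠ s}} (h : p m = n.1) :
    (Finset.univ.filter (fun k : {i : V // i ≠ s} =>
        (graph e).dist m.1 s < (graph e).dist k.1 s)).card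
      < (Finset.univ.filter (fun k : {i : V // i ≠ s} =>
        (graph e).dist n.1 s < (graph e).dist k.1 s)).card := by
  have hdm : (graph e).dist n.1 s + 1 = (graph e).dist m.1 s := by
    have h2 := (hp m).2
    rw [h] at h2
    exact h2
  apply Finset.card_lt_card
  rw [Finset.ssubset_def]
  constructor
  · intro k hk
    simp only [Finset.mem_filter, Finset.mem_univ, true_and] at *
    omega
  · intro hsub
    have hm : m ∈ Finset.univ.filter (fun k : {i : V // i ≠ s} =>
        (graph e).dist n.1 s < (graph e).dist k.1 s) := by
      simp only [Finset.mem_filter, Finset.mem_univ, true_and]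
      omega
    have := hsub hm
    simp only [Finset.mem_filter, Finset.mem_univ, true_and] at this
    omega

lemma topples_after_parent (hsym : ∀ i j : V, e i j = e j i) (htree : (graph e).IsTree)
    {p : {i : V // i ≠ s} → V} (hp : IsParent e s p)
    {x y : Conf s} {L : List {i : V // i ≠ s}} (hv : ValidSeq e s x L)
    (hxy : applySeq e s x L = y) (hst : Stable e s y) (hx : ∀ j, deg e j.1 ≤ x j) :
    ∀ (N : ℕ) (n par : {i : V // i ≠ s}),
      (Finset.univ.filter (fun k : {i : V // i ≠ s} =>
        (graph e).dist n.1 s < (graph e).dist k.1 s)).card = N →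
      p n = par.1 →
      ∀ (A B : List {i : V // i ≠ s}), L = A ++ par :: B → par ∉ B → n ∈ B := by
  intro N
  induction N using Nat.strong_induction_on with
  | _ N IH =>
    intro n par hN hpar A B hLAB hparB
    by_contra hnB
    have hnpar : n ≠ par := by
      intro h
      rw [h] at hpar
      exact parent_dist_ne hp par hpar
    have hnL : n ∈ L := mem_of_big hxy hst n (hx n)
    have hnA : n ∈ A := by
      rw [hLAB] at hnL
      rcases List.mem_append.mp hnL with h | h
      · exact h
      · rcases List.mem_cons.mp h with h | h
        · exact absurd h hnpar
        · exact absurd h hnB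
    obtain ⟨A', B', hA, hB'⟩ := exists_last_split hnA
    set R : List {i : V // i ≠ s} := B' ++ par :: B with hR
    have hLR : L = A' ++ n :: R := by rw [hLAB, hA]; simp; exact hR.symm
    have hnR : n ∉ R := by
      intro h
      rcases List.mem_append.mp h with h | h
      · exact hB' h
      · rcases List.mem_cons.mp h with h | h
        · exact hnpar h
        · exact hnB h
    set x₁ := applySeq e s x A' with hx₁def
    have hv' := hv
    rw [hLR, validSeq_append] at hv'
    obtain ⟨-, hv2⟩ := hv'
    rw [validSeq_cons] at hv2
    obtain ⟨hdegn, -⟩ := hv2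
    have hyn : y n = (toppleAt e s n x₁) n + (R.map (fun i => e i.1 n.1)).sum := by
      rw [← hxy, hLR, applySeq_append, applySeq_cons]
      exact applySeq_not_mem (e := e) hnR
    have hz := toppleAt_self' (e := e) (s := s) (i := n) (u := x₁)
    set C : Finset {i : V // i ≠ s} :=
      Finset.univ.filter (fun m : {i : V // i ≠ s} => p m = n.1) with hC
    have hchild : ∀ m ∈ C, m ∈ R := by
      intro m hm
      have hpm : p m = n.1 := (Finset.mem_filter.mp hm).2
      exact IH _ (by rw [← hN]; exact measure_lt hp hpm) m n rfl hpm A' R hLR hnR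
    have hparC : par ∉ C := by
      intro h
      have h1 := (Finset.mem_filter.mp h).2
      have h2 := (hp n).2
      have h3 := (hp par).2
      rw [hpar] at h2
      rw [h1] at h3
      omega
    have hparR : par ∈ R := by
      rw [hR]
      exact List.mem_append.mpr (Or.inr List.mem_cons_self)
    have hTmem : ∀ m ∈ insert par C, m ∈ R := by
      intro m hm
      rcases Finset.mem_insert.mp hm with h | h
      · rw [h]; exact hparR
      · exact hchild m h
    have hsum := list_sum_ge R (insert par C) hTmem (fun i => e i.1 n.1)
    rw [Finset.sum_insert hparC] at hsum
    have hdeg := deg_le_children hsym htree hp n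
    rw [hpar] at hdeg
    have hsymsum : ∑ m ∈ C, e n.1 m.1 = ∑ m ∈ C, e m.1 n.1 :=
      Finset.sum_congr rfl (fun m _ => hsym n.1 m.1)
    have hstn := hst n
    have hepar : e n.1 par.1 = e par.1 n.1 := hsym _ _
    rw [← hC] at hdeg
    have hb : applySeq e s x A' n = x₁ n := rfl
    omega

end MainAux

theorem stmt_4 (e : V → V → ℕ) (s : V) (hsym : ∀ i j : V, e i j = e j i)
    (htree : (graph e).IsTree)
    (p : {i : V // i ≠ s} → V) (hp : IsParent e s p)
    (σ : Conf s → Conf s) (hσ : IsStabilization e s σ) (u : Conf s) :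
    Recurrent e s σ u ↔
      ∀ j : {i : V // i ≠ s}, deg e j.1 - e j.1 (p j) ≤ u j ∧ u j < deg e j.1 := by
  constructor
  · -- recurrent implies the bounds
    rintro ⟨hstab, hrecur⟩
    obtain ⟨w, hw⟩ := hrecur (fun j => deg e j.1)
    set x : Conf s := (fun j => deg e j.1) + w with hxdef
    have hx : ∀ j, deg e j.1 ≤ x j := by
      intro j
      have h1 : x j = deg e j.1 + w j := rfl
      omega
    obtain ⟨hst', hrtg⟩ := hσ x
    rw [hw] at hst' hrtg
    obtain ⟨L, hv, hxy⟩ := rtg_to_list hrtg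
    intro j
    refine ⟨?_, hstab j⟩
    have hjL : j ∈ L := mem_of_big hxy hstab j (hx j)
    obtain ⟨A, B, hLAB, hjB⟩ := exists_last_split hjL
    set C : Finset {i : V // i ≠ s} :=
      Finset.univ.filter (fun m : {i : V // i ≠ s} => p m = j.1) with hC
    have hchild : ∀ m ∈ C, m ∈ B := by
      intro m hm
      exact topples_after_parent hsym htree hp hv hxy hstab hx _ m j rfl
        (Finset.mem_filter.mp hm).2 A B hLAB hjB
    set x₁ := applySeq e s x A with hx₁def
    have hv' := hv
    rw [hLAB, validSeq_append] at hv'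
    obtain ⟨-, hv2⟩ := hv'
    rw [validSeq_cons] at hv2
    obtain ⟨hdegj, -⟩ := hv2
    have hyj : u j = (toppleAt e s j x₁) j + (B.map (fun i => e i.1 j.1)).sum := by
      rw [← hxy, hLAB, applySeq_append, applySeq_cons]
      exact applySeq_not_mem (e := e) hjB
    have hz := toppleAt_self' (e := e) (s := s) (i := j) (u := x₁)
    have hsum := list_sum_ge B C hchild (fun i => e i.1 j.1)
    have hdeg := deg_le_children hsym htree hp j
    rw [← hC] at hdeg
    have hsymsum : ∑ m ∈ C, e j.1 m.1 = ∑ m ∈ C, e m.1 j.1 :=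
      Finset.sum_congr rfl (fun m _ => hsym j.1 m.1)
    have hb : applySeq e s x A j = x₁ j := rfl
    omega
  · -- the bounds imply recurrence
    intro H
    constructor
    · exact fun j => (H j).2
    · intro v
      obtain ⟨k, hk⟩ := exists_k_full hsym htree hp v
      set w : Conf s := fun j => u j + (rowSum e s k j - (v j : ℤ)).toNat with hwdef
      refine ⟨w, ?_⟩
      have hx : ∀ j, (((v + w) j : ℕ) : ℤ) = (u j : ℤ) + rowSum e s k j := by
        intro j
        have h1 : (0:ℤ) ≤ rowSum e s k j - (v j : ℤ) := by linarith [hk j]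
        have h2 : (v + w) j = v j + w j := rfl
        have h3 : w j = u j + (rowSum e s k j - (v j : ℤ)).toNat := rfl
        have h4 := Int.toNat_of_nonneg h1
        rw [h2, h3]
        push_cast
        omega
      have hu' : ∀ j, deg e j.1 ≤ u j + e j.1 (p j) := by
        intro j
        have := (H j).1
        omega
      have hreach := reach_down hsym hp hu' (∑ i, k i) k (v + w) rfl hx
      obtain ⟨hstab', hrtg'⟩ := hσ (v + w)
      exact unique_nf' hrtg' hreach hstab' (fun j => (H j).2)

end SandpilePaper
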